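/- Let (X, ρ) be a metric space, λ ∈ Δ∞, and x = (x_k)_{k∈ℕ} a sequence in X. Suppose there exist an infinite set B ⊆ ℕ that does not have λ-density zero and a compact subset C of X such that x_k ∈ C for all k ∈ B (i.e., x has a λ-nonthin subsequence lying in a compact set). Then the set Γ_x(λ) of λ-statistical cluster points of x is nonempty and closed. (This is the paper's Theorem 4.6, specialized to the PM space induced by a metric, where F_{xy} = ε_{ρ(x,y)} and the strong topology is the metric topology.) -/

import Mathlib

open Filter Topology

/-- `l` belongs to the class `Δ∞`: a nondecreasing (for indices `≥ 1`) sequence of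
positive reals tending to `∞` with `l 1 = 1` and `l (n+1) ≤ l n + 1`. -/
def DeltaInfty (l : ℕ → ℝ) : Prop :=
  (∀ n, 1 ≤ n → 0 < l n) ∧ (∀ m n, 1 ≤ m → m ≤ n → l m ≤ l n) ∧
    Tendsto l atTop atTop ∧ l 1 = 1 ∧ ∀ n, 1 ≤ n → l (n + 1) ≤ l n + 1

open Classical in
/-- The number of elements of `M` in the window `I_n = [n - l n + 1, n] ∩ ℕ`. -/
noncomputable def lamCount (l : ℕ → ℝ) (M : Set ℕ) (n : ℕ) : ℕ :=
  ((Finset.Icc 1 n).filter (fun (k : ℕ) => ((n : ℝ) - l n + 1 ≤ (k : ℝ)) ∧ k ∈ M)).card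

/-- `M ⊆ ℕ` has `λ`-density `r`: `|{k ∈ I_n : k ∈ M}| / l n → r`. -/
def lamDensity (l : ℕ → ℝ) (M : Set ℕ) (r : ℝ) : Prop :=
  Tendsto (fun n => (lamCount l M n : ℝ) / l n) atTop (𝓝 r)

/-- `Y` is a `λ`-statistical cluster point of `x`: for every `t > 0` the set
`{k : dist (x k) Y < t}` does not have `λ`-density zero. -/
def LamStatClusterPt {X : Type*} [MetricSpace X] (l : ℕ → ℝ) (x : ℕ → X) (Y : X) : Prop :=
  ∀ t > 0, ¬ lamDensity l {k | dist (x k) Y < t} 0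

private lemma lamCount_mono (l : ℕ → ℝ) {M N : Set ℕ} (h : M ⊆ N) (n : ℕ) :
    lamCount l M n ≤ lamCount l N n := by
  classical
  unfold lamCount
  apply Finset.card_le_card
  intro k hk
  simp only [Finset.mem_filter] at hk ⊢
  exact ⟨hk.1, hk.2.1, h hk.2.2⟩

private lemma lamCount_union_le (l : ℕ → ℝ) (M N : Set ℕ) (n : ℕ) :
    lamCount l (M ∪ N) n ≤ lamCount l M n + lamCount l N n := by
  classical
  unfold lamCount
  refine le_trans (Finset.card_le_card ?_) (Finset.card_union_le _ _)
  intro k hk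
  simp only [Finset.mem_filter, Finset.mem_union, Set.mem_union] at hk ⊢
  rcases hk.2.2 with h | h
  · exact Or.inl ⟨hk.1, hk.2.1, h⟩
  · exact Or.inr ⟨hk.1, hk.2.1, h⟩

private lemma dzero_mono (l : ℕ → ℝ) (hl : DeltaInfty l) {M N : Set ℕ} (h : M ⊆ N)
    (hN : lamDensity l N 0) : lamDensity l M 0 := by
  refine tendsto_of_tendsto_of_tendsto_of_le_of_le' tendsto_const_nhds hN ?_ ?_
  · filter_upwards [eventually_ge_atTop 1] with n hn
    have hpos := hl.1 n hn
    positivity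
  · filter_upwards [eventually_ge_atTop 1] with n hn
    have hpos := hl.1 n hn
    have := lamCount_mono l h n
    gcongr

private lemma dzero_union (l : ℕ → ℝ) (hl : DeltaInfty l) {M N : Set ℕ}
    (hM : lamDensity l M 0) (hN : lamDensity l N 0) : lamDensity l (M ∪ N) 0 := by
  have hsum : Tendsto (fun n => (lamCount l M n : ℝ) / l n + (lamCount l N n : ℝ) / l n)
      atTop (𝓝 0) := by simpa using hM.add hN
  refine tendsto_of_tendsto_of_tendsto_of_le_of_le' tendsto_const_nhds hsum ?_ ?_
  · filter_upwards [eventually_ge_atTop 1] with n hn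
    have hpos := hl.1 n hn
    positivity
  · filter_upwards [eventually_ge_atTop 1] with n hn
    have hpos := hl.1 n hn
    rw [← add_div]
    have := lamCount_union_le l M N n
    gcongr
    exact_mod_cast this

private lemma dzero_empty (l : ℕ → ℝ) : lamDensity l (∅ : Set ℕ) 0 := by
  have h : ∀ n, lamCount l (∅ : Set ℕ) n = 0 := by
    intro n; unfold lamCount; simp
  simp only [lamDensity, h]
  simp

private lemma dzero_biUnion (l : ℕ → ℝ) (hl : DeltaInfty l) {ι : Type*} (s : Finset ι)
    (A : ι → Set ℕ) (h : ∀ i ∈ s, lamDensity l (A i) 0) :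
    lamDensity l (⋃ i ∈ s, A i) 0 := by
  classical
  induction s using Finset.induction with
  | empty => simpa using dzero_empty l
  | @insert a s hna ih =>
    rw [Finset.set_biUnion_insert]
    exact dzero_union l hl (h a (Finset.mem_insert_self a s))
      (ih fun i hi => h i (Finset.mem_insert_of_mem hi))

theorem lamStatClusterPts_nonempty_and_closed {X : Type*} [MetricSpace X]
    (l : ℕ → ℝ) (hl : DeltaInfty l) (x : ℕ → X) (B : Set ℕ) (C : Set X)
    (hBinf : B.Infinite) (hB : ¬ lamDensity l B 0) (hC : IsCompact C)
    (hmem : ∀ k ∈ B, x k ∈ C) :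
    {Y | LamStatClusterPt l x Y}.Nonempty ∧ IsClosed {Y | LamStatClusterPt l x Y} := by
  constructor
  · by_contra hne
    rw [Set.not_nonempty_iff_eq_empty, Set.eq_empty_iff_forall_notMem] at hne
    have hne' : ∀ Y : X, ∃ t > 0, lamDensity l {k | dist (x k) Y < t} 0 := by
      intro Y
      have := hne Y
      simp only [Set.mem_setOf_eq, LamStatClusterPt] at this
      push_neg at this
      exact this
    choose t ht hd using hne'
    have hcov : C ⊆ ⋃ y : X, Metric.ball y (t y) := by
      intro y hy
      exact Set.mem_iUnion.2 ⟨y, Metric.mem_ball_self (ht y)⟩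
    obtain ⟨s, hs⟩ := hC.elim_finite_subcover (fun y : X => Metric.ball y (t y))
      (fun y => Metric.isOpen_ball) hcov
    have hsub : B ⊆ ⋃ y ∈ s, {k | dist (x k) y < t y} := by
      intro k hk
      have := hs (hmem k hk)
      simp only [Set.mem_iUnion, Metric.mem_ball] at this
      obtain ⟨y, hys, hky⟩ := this
      exact Set.mem_iUnion.2 ⟨y, Set.mem_iUnion.2 ⟨hys, hky⟩⟩
    exact hB (dzero_mono l hl hsub (dzero_biUnion l hl s _ fun y _ => hd y))
  · rw [← isOpen_compl_iff, Metric.isOpen_iff]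
    intro Y hY
    simp only [Set.mem_compl_iff, Set.mem_setOf_eq, LamStatClusterPt] at hY
    push_neg at hY
    obtain ⟨tt, htt, hd⟩ := hY
    refine ⟨tt / 2, by positivity, fun Z hZ => ?_⟩
    simp only [Set.mem_compl_iff, Set.mem_setOf_eq, LamStatClusterPt]
    push_neg
    refine ⟨tt / 2, by positivity, ?_⟩
    refine dzero_mono l hl ?_ hd
    intro k hk
    simp only [Set.mem_setOf_eq] at hk ⊢
    have hZ' : dist Z Y < tt / 2 := Metric.mem_ball.1 hZ
    calc dist (x k) Y ≤ dist (x k) Z + dist Z Y := dist_triangle _ _ _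
      _ < tt / 2 + tt / 2 := add_lt_add hk hZ'
      _ = tt := by ring
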